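/- Let G be a kite-augmented 1-plane graph, let s and t be distinct vertices of G, and let H be an (s,t)-subgraph of G. Then H contains an (s,t)-path P that is a shortest (s,t)-path in H and is non-self-crossing, i.e., no two edges of P cross each other in the drawing. -/

import Mathlib

open SimpleGraph Set

namespace CopsRobbers

variable {V : Type}

/-- One step of a player in the game: stay put or move to an adjacent vertex. -/
def Step (G : SimpleGraph V) (a b : V) : Prop := a = b ∨ G.Adj a b

/-- `u` is within graph distance `d` of `v` in `G`. -/
def WithinDist (G : SimpleGraph V) (d : ℕ) (u v : V) : Prop :=
  ∃ w : G.Walk u v, w.length ≤ d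

/-- `p` cops have a strategy on `G` that guarantees capturing the robber at distance `d`
within finitely many rounds.  A cop strategy is a function `F` from the history of robber
positions to the positions of the `p` cops (`F []` gives the initial placement, chosen
before the robber places himself); the robber is modelled by an arbitrary trajectory
`r : ℕ → V` of vertices, each step staying put or moving along an edge.  Capture happens
if after some robber move, or after the cops' reply to it, some cop is within distance
`d` of the robber. -/
def CopsWin (G : SimpleGraph V) (d p : ℕ) : Prop :=
  ∃ F : List V → Fin p → V,
    (∀ (hist : List V) (x : V) (i : Fin p), Step G (F hist i) (F (hist ++ [x]) i)) ∧
    ∀ r : ℕ → V, (∀ n, Step G (r n) (r (n + 1))) →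
      ∃ (n : ℕ) (i : Fin p),
        WithinDist G d (F (List.ofFn fun m : Fin n => r m.val) i) (r n) ∨
        WithinDist G d (F (List.ofFn fun m : Fin (n + 1) => r m.val) i) (r n)

/-- The distance-`d` cop number of `G`: the least number of cops that can guarantee
capture at distance `d`. -/
noncomputable def copNumber (G : SimpleGraph V) (d : ℕ) : ℕ :=
  sInf { p | CopsWin G d p }

end CopsRobbers
namespace CopsRobbers

/-- A drawing of a finite simple graph in the plane: vertices go to distinct points, every
edge `uv` is drawn as a simple arc `arc u v` (parametrised on `[0,1]`, with
`arc v u` the reverse parametrisation) joining the endpoints, avoiding all vertex points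
in its interior, any two arcs meet in finitely many points, and no non-vertex point lies
on three or more arcs. -/
structure PlaneDrawing {V : Type} (G : SimpleGraph V) where
  vpos : V → ℝ × ℝ
  arc : V → V → ℝ → ℝ × ℝ
  vpos_inj : Function.Injective vpos
  arc_symm : ∀ u v, G.Adj u v → ∀ t : ℝ, arc u v t = arc v u (1 - t)
  arc_cont : ∀ u v, G.Adj u v → ContinuousOn (arc u v) (Set.Icc (0:ℝ) 1)
  arc_start : ∀ u v, G.Adj u v → arc u v 0 = vpos u
  arc_end : ∀ u v, G.Adj u v → arc u v 1 = vpos v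
  arc_injOn : ∀ u v, G.Adj u v → Set.InjOn (arc u v) (Set.Icc (0:ℝ) 1)
  arc_avoid : ∀ u v, G.Adj u v → ∀ t ∈ Set.Ioo (0:ℝ) 1, ∀ w, arc u v t ≠ vpos w
  finite_inter : ∀ u v w x, G.Adj u v → G.Adj w x → s(u, v) ≠ s(w, x) →
    (arc u v '' Set.Icc (0:ℝ) 1 ∩ arc w x '' Set.Icc (0:ℝ) 1).Finite
  no_triple : ∀ pt : ℝ × ℝ, pt ∉ Set.range vpos →
    ∀ u₁ v₁ u₂ v₂ u₃ v₃, G.Adj u₁ v₁ → G.Adj u₂ v₂ → G.Adj u₃ v₃ →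
      s(u₁, v₁) ≠ s(u₂, v₂) → s(u₁, v₁) ≠ s(u₃, v₃) → s(u₂, v₂) ≠ s(u₃, v₃) →
      ¬(pt ∈ arc u₁ v₁ '' Set.Icc (0:ℝ) 1 ∧ pt ∈ arc u₂ v₂ '' Set.Icc (0:ℝ) 1 ∧
        pt ∈ arc u₃ v₃ '' Set.Icc (0:ℝ) 1)

namespace PlaneDrawing

variable {V : Type} {G : SimpleGraph V}

/-- The edges `uv` and `wx` cross in the drawing: they are distinct edges sharing a point
interior to both arcs. -/
def Crosses (D : PlaneDrawing G) (u v w x : V) : Prop :=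
  G.Adj u v ∧ G.Adj w x ∧ s(u, v) ≠ s(w, x) ∧
    ∃ pt : ℝ × ℝ, pt ∈ D.arc u v '' Set.Ioo (0:ℝ) 1 ∧ pt ∈ D.arc w x '' Set.Ioo (0:ℝ) 1

/-- `e` is an uncrossed edge of the drawing. -/
def UncrossedE (D : PlaneDrawing G) (e : Sym2 V) : Prop :=
  ∀ a b w x, s(a, b) = e → ¬D.Crosses a b w x

/-- The set of crossing points lying on the edge `uv`. -/
def crossingPointsOn (D : PlaneDrawing G) (u v : V) : Set (ℝ × ℝ) :=
  { pt | pt ∈ D.arc u v '' Set.Ioo (0:ℝ) 1 ∧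
      ∃ w x, D.Crosses u v w x ∧ pt ∈ D.arc w x '' Set.Ioo (0:ℝ) 1 }

/-- `pt` is a crossing point of the drawing. -/
def IsCrossingPoint (D : PlaneDrawing G) (pt : ℝ × ℝ) : Prop :=
  ∃ u v w x, D.Crosses u v w x ∧ pt ∈ D.arc u v '' Set.Ioo (0:ℝ) 1 ∧
    pt ∈ D.arc w x '' Set.Ioo (0:ℝ) 1

/-- The drawing is `k`-plane: every edge is crossed at most `k` times. -/
def KPlane (D : PlaneDrawing G) (k : ℕ) : Prop :=
  ∀ u v, G.Adj u v → (D.crossingPointsOn u v).Finite ∧ (D.crossingPointsOn u v).ncard ≤ k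

/-- The drawing is 1-plane: every edge is crossed at most once, and (as usual) no two
edges sharing an endpoint cross, so every crossing has four distinct endpoints. -/
def OnePlane (D : PlaneDrawing G) : Prop :=
  D.KPlane 1 ∧ ∀ u v w x, D.Crosses u v w x → u ≠ w ∧ u ≠ x ∧ v ≠ w ∧ v ≠ x

/-- The parameter `X(G)` of the drawing: the least `n` such that for every crossing,
every pair of consecutive endpoints is joined by a path of length at most `n`. -/
noncomputable def Xparam (D : PlaneDrawing G) : ℕ :=
  sInf { n | ∀ u v w x, D.Crosses u v w x → ∀ a b : V, (a = u ∨ a = v) → (b = w ∨ b = x) →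
    ∃ p : G.Walk a b, p.length ≤ n }

/-- The parameter `x(G)` of the drawing: the least `n` such that for every crossing,
some pair of consecutive endpoints is joined by a path of length at most `n`. -/
noncomputable def xparam (D : PlaneDrawing G) : ℕ :=
  sInf { n | ∀ u v w x, D.Crosses u v w x → ∃ a b : V, (a = u ∨ a = v) ∧ (b = w ∨ b = x) ∧
    ∃ p : G.Walk a b, p.length ≤ n }

/-- The subset of the plane covered by the drawing. -/
def image (D : PlaneDrawing G) : Set (ℝ × ℝ) :=
  Set.range D.vpos ∪ ⋃ (u : V) (v : V) (_ : G.Adj u v), D.arc u v '' Set.Icc (0:ℝ) 1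

/-- Faces of the drawing: connected components of the complement. -/
def IsFace (D : PlaneDrawing G) (F : Set (ℝ × ℝ)) : Prop :=
  ∃ z ∉ D.image, F = connectedComponentIn D.imageᶜ z

/-- The subset of the plane covered by the arc of the (unordered) edge `e`. -/
def edgeArcSet (D : PlaneDrawing G) (e : Sym2 V) : Set (ℝ × ℝ) :=
  ⋃ (a : V) (b : V) (_ : G.Adj a b) (_ : s(a, b) = e), D.arc a b '' Set.Icc (0:ℝ) 1

/-- The skeleton of the drawing: the subgraph consisting of all uncrossed edges. -/
def skeleton (D : PlaneDrawing G) : SimpleGraph V where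
  Adj u v := G.Adj u v ∧ D.UncrossedE s(u, v)
  symm := by
    refine ⟨fun u v h => ?_⟩
    refine ⟨h.1.symm, ?_⟩
    rw [Sym2.eq_swap]
    exact h.2
  loopless := ⟨fun v h => G.loopless.irrefl v h.1⟩

/-- The subset of the plane covered by the drawing of the skeleton. -/
def skelImage (D : PlaneDrawing G) : Set (ℝ × ℝ) :=
  ⋃ (u : V) (v : V) (_ : G.Adj u v) (_ : D.UncrossedE s(u, v)), D.arc u v '' Set.Icc (0:ℝ) 1

/-- Faces of the skeleton: connected components of the complement of its drawing. -/
def IsSkelFace (D : PlaneDrawing G) (F : Set (ℝ × ℝ)) : Prop :=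
  ∃ z ∉ D.skelImage, F = connectedComponentIn D.skelImageᶜ z

/-- `κ` is a kite path for the crossing of `uv` and `wx` joining the consecutive
endpoints `u` and `w`: a shortest `(u,w)`-path all of whose edges are uncrossed and whose
internal vertices have degree `2`, such that the part of the arc of `uv` from `u` to the
crossing point, the arcs of `κ`, and the part of the arc of `wx` from the crossing point
to `w` together bound a face of the drawing. -/
def IsKitePath (D : PlaneDrawing G) (u v w x : V) (κ : G.Walk u w) : Prop :=
  D.Crosses u v w x ∧ κ.IsPath ∧ (∀ q : G.Walk u w, κ.length ≤ q.length) ∧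
  (∀ e ∈ κ.edges, D.UncrossedE e) ∧
  (∀ y ∈ κ.support, y ≠ u → y ≠ w → (G.neighborSet y).ncard = 2) ∧
  ∃ t s' : ℝ, t ∈ Set.Ioo (0:ℝ) 1 ∧ s' ∈ Set.Ioo (0:ℝ) 1 ∧ D.arc u v t = D.arc w x s' ∧
    ∃ F, D.IsFace F ∧
      frontier F = (D.arc u v '' Set.Icc 0 t) ∪ (⋃ e ∈ κ.edges, D.edgeArcSet e) ∪
        (D.arc w x '' Set.Icc 0 s')

/-- The drawing is kite-augmented: for every crossing and every pair of consecutive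
endpoints there is a kite path joining them. -/
def KiteAugmented (D : PlaneDrawing G) : Prop :=
  ∀ u v w x, D.Crosses u v w x → ∃ κ : G.Walk u w, D.IsKitePath u v w x κ

/-- The face-distance between any two distinct crossing points of the drawing is at
least `f`: every chain of faces `Fc 0, …, Fc (j-1)` linked by vertex or crossing points
`pts 0 = c₁, pts 1, …, pts j = c₂` on the boundaries of consecutive faces (i.e. every
path in the radial graph between the two crossing points) uses at least `f` faces. -/
def FaceDistGe (D : PlaneDrawing G) (f : ℕ) : Prop :=
  ∀ c₁ c₂ : ℝ × ℝ, D.IsCrossingPoint c₁ → D.IsCrossingPoint c₂ → c₁ ≠ c₂ →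
    ∀ (j : ℕ) (Fc : Fin j → Set (ℝ × ℝ)) (pts : Fin (j + 1) → ℝ × ℝ),
      (∀ i, D.IsFace (Fc i)) →
      (∀ i, pts i ∈ Set.range D.vpos ∨ D.IsCrossingPoint (pts i)) →
      pts 0 = c₁ → pts (Fin.last j) = c₂ →
      (∀ i : Fin j, pts i.castSucc ∈ frontier (Fc i) ∧ pts i.succ ∈ frontier (Fc i)) →
      f ≤ j

end PlaneDrawing

end CopsRobbers
namespace CopsRobbers

/-- `H` is (a copy of) the `k`-subdivision `G^(k)` of `G`: `φ` embeds the vertices of `G`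
into those of `H`, and for every ordered adjacent pair `u v` of `G`, the vertices
`p u v 0, p u v 1, …, p u v k` form the path of length `k` of `H` replacing the
edge `uv` (traversed in the opposite direction for `p v u`); the interior vertices
of these paths are fresh and pairwise disjoint for distinct edges, the edges of `H` are
exactly the edges of these paths, and every vertex of `H` arises from `G` or from a
path. -/
structure IsKSubdivision {V W : Type} (G : SimpleGraph V) (k : ℕ) (H : SimpleGraph W)
    (φ : V → W) (p : V → V → ℕ → W) : Prop where
  phi_inj : Function.Injective φ
  start : ∀ u v, G.Adj u v → p u v 0 = φ u
  finish : ∀ u v, G.Adj u v → p u v k = φ v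
  rev : ∀ u v, G.Adj u v → ∀ i ≤ k, p u v i = p v u (k - i)
  inj : ∀ u v, G.Adj u v → ∀ i ≤ k, ∀ j ≤ k, p u v i = p u v j → i = j
  internal : ∀ u v, G.Adj u v → ∀ i, 0 < i → i < k → p u v i ∉ Set.range φ
  disjoint : ∀ u v u' v', G.Adj u v → G.Adj u' v' → s(u, v) ≠ s(u', v') →
    ∀ i j, 0 < i → i < k → 0 < j → j < k → p u v i ≠ p u' v' j
  adj_iff : ∀ a b : W, H.Adj a b ↔ ∃ u v, ∃ _ : G.Adj u v, ∃ i < k,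
    (a = p u v i ∧ b = p u v (i + 1)) ∨ (b = p u v i ∧ a = p u v (i + 1))
  cover : ∀ w : W, (∃ v, w = φ v) ∨ ∃ u v, ∃ _ : G.Adj u v, ∃ i ≤ k, w = p u v i

/-- `H` together with its drawing `DH` is the subdivision `G^(k)` of the drawn graph
`(G, D)`, drawn by placing the subdivision vertices of each edge on its arc, so that the
crossings of `G^(k)` are exactly the crossings of `G`, occurring between subdivision
edges. -/
structure IsDrawnSubdivision {V W : Type} (G : SimpleGraph V) (D : PlaneDrawing G)
    (k : ℕ) (H : SimpleGraph W) (DH : PlaneDrawing H) (φ : V → W)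
    (p : V → V → ℕ → W) : Prop where
  sub : IsKSubdivision G k H φ p
  vpos_eq : ∀ v, DH.vpos (φ v) = D.vpos v
  on_arc : ∀ u v, G.Adj u v → ∀ i ≤ k, DH.vpos (p u v i) ∈ D.arc u v '' Set.Icc (0:ℝ) 1
  arcs_cover : ∀ u v, G.Adj u v →
    (⋃ i ∈ Finset.range k, DH.edgeArcSet s(p u v i, p u v (i + 1))) =
      D.arc u v '' Set.Icc (0:ℝ) 1
  cross_of : ∀ a b c e, DH.Crosses a b c e →
    ∃ u v w x, D.Crosses u v w x ∧ ∃ i < k, ∃ j < k,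
      s(a, b) = s(p u v i, p u v (i + 1)) ∧ s(c, e) = s(p w x j, p w x (j + 1))
  of_cross : ∀ u v w x, D.Crosses u v w x → ∃ i < k, ∃ j < k,
      DH.Crosses (p u v i) (p u v (i + 1)) (p w x j) (p w x (j + 1))

/-- `(H, DH)` is a 1-planarisation of the drawn graph `(G, D)`: a drawn subdivision
`G^(k)` of `G` whose drawing is 1-plane. -/
structure IsOnePlanarisation {V W : Type} (G : SimpleGraph V) (D : PlaneDrawing G)
    (k : ℕ) (H : SimpleGraph W) (DH : PlaneDrawing H) (φ : V → W)
    (p : V → V → ℕ → W) : Prop where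
  drawn : IsDrawnSubdivision G D k H DH φ p
  oneplane : DH.OnePlane

/-- `(K, DK)` is the kite-augmentation of the 1-plane drawn graph `(H, DH)` via the
embedding `ψ`: the drawing of `H` is kept unchanged, and for every crossing and every
pair of consecutive endpoints a new path with fresh internal vertices, of length equal to
the distance of the two endpoints in `H`, is added and drawn so that the resulting
drawing is a kite-augmented 1-plane drawing with the same crossings. -/
structure IsKiteAugmentationOf {W U : Type} {H : SimpleGraph W} (DH : PlaneDrawing H)
    {K : SimpleGraph U} (DK : PlaneDrawing K) (ψ : W → U) : Prop where
  inj : Function.Injective ψ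
  adj_iff : ∀ a b, K.Adj (ψ a) (ψ b) ↔ H.Adj a b
  vpos_eq : ∀ a, DK.vpos (ψ a) = DH.vpos a
  arc_eq : ∀ a b, H.Adj a b → ∀ t ∈ Set.Icc (0:ℝ) 1, DK.arc (ψ a) (ψ b) t = DH.arc a b t
  oneplane : DK.OnePlane
  kite : DK.KiteAugmented
  new_path : ∀ u v w x, DH.Crosses u v w x →
    ∃ κ : K.Walk (ψ u) (ψ w), κ.IsPath ∧ κ.length = H.dist u w ∧
      ∀ y ∈ κ.support, y ≠ ψ u → y ≠ ψ w → y ∉ Set.range ψ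
  new_deg : ∀ z : U, z ∉ Set.range ψ → (K.neighborSet z).ncard = 2
  cross_of : ∀ a b c e, DK.Crosses a b c e →
    ∃ u v w x, DH.Crosses u v w x ∧ s(a, b) = s(ψ u, ψ v) ∧ s(c, e) = s(ψ w, ψ x)

end CopsRobbers

namespace CopsRobbers

/-- The walk `w` of `G` lies inside the subgraph `S` of `G`. -/
def WalkInSubgraph {V : Type} {G : SimpleGraph V} (S : G.Subgraph) {a b : V}
    (w : G.Walk a b) : Prop :=
  (∀ y ∈ w.support, y ∈ S.verts) ∧ ∀ e ∈ w.edges, e ∈ S.edgeSet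

/-- `S` is an `(s,t)`-subgraph of the drawn graph `(G, D)`: a connected subgraph
containing `s` and `t` such that for every pair of distinct vertices `a, b` of `S` with
`{a, b} ≠ {s, t}`, every kite path `κ_{ab}` of `G` joining `a` and `b` is contained in
`S`. -/
def IsSTSubgraph {V : Type} {G : SimpleGraph V} (D : PlaneDrawing G) (s t : V)
    (S : G.Subgraph) : Prop :=
  S.coe.Connected ∧ s ∈ S.verts ∧ t ∈ S.verts ∧
    ∀ a b, a ∈ S.verts → b ∈ S.verts → a ≠ b → ({a, b} : Set V) ≠ {s, t} →
      ∀ (v x : V) (κ : G.Walk a b), D.IsKitePath a v b x κ → WalkInSubgraph S κ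

end CopsRobbers

namespace CopsRobbers

namespace PlaneDrawing

variable {V : Type} {G : SimpleGraph V}

lemma Crosses.swap_left {D : PlaneDrawing G} {u v w x : V} (h : D.Crosses u v w x) :
    D.Crosses v u w x := by
  obtain ⟨huv, hwx, hne, pt, ⟨r, hr, hpt⟩, h2⟩ := h
  refine ⟨huv.symm, hwx, by rw [Sym2.eq_swap]; exact hne, pt, ⟨1 - r, ?_, ?_⟩, h2⟩
  · exact ⟨by linarith [hr.2], by linarith [hr.1]⟩
  · rw [← D.arc_symm u v huv]; exact hpt

lemma Crosses.comm {D : PlaneDrawing G} {u v w x : V} (h : D.Crosses u v w x) :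
    D.Crosses w x u v := by
  obtain ⟨huv, hwx, hne, pt, hp1, hp2⟩ := h
  exact ⟨hwx, huv, hne.symm, pt, hp2, hp1⟩

lemma Crosses.swap_right {D : PlaneDrawing G} {u v w x : V} (h : D.Crosses u v w x) :
    D.Crosses u v x w :=
  h.comm.swap_left.comm

lemma crosses_of_sym2_eq {D : PlaneDrawing G} {a b c d a' b' c' d' : V}
    (h1 : s(a', b') = s(a, b)) (h2 : s(c', d') = s(c, d))
    (h : D.Crosses a b c d) : D.Crosses a' b' c' d' := by
  rw [Sym2.eq_iff] at h1 h2
  rcases h1 with ⟨rfl, rfl⟩ | ⟨rfl, rfl⟩ <;> rcases h2 with ⟨rfl, rfl⟩ | ⟨rfl, rfl⟩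
  · exact h
  · exact h.swap_right
  · exact h.swap_left
  · exact h.swap_left.swap_right

end PlaneDrawing

open SimpleGraph

lemma walk_split1 {V : Type} {G : SimpleGraph V} {s t : V} (p : G.Walk s t)
    {e : Sym2 V} (he : e ∈ p.edges) :
    ∃ (c d : V) (hcd : G.Adj c d) (q2 : G.Walk s c) (q3 : G.Walk d t),
      p = q2.append (Walk.cons hcd q3) ∧ s(c, d) = e := by
  induction p with
  | nil => simp at he
  | cons h q ih =>
    rw [Walk.edges_cons, List.mem_cons] at he
    rcases he with he | he
    · exact ⟨_, _, h, Walk.nil, q, by simp, he.symm⟩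
    · obtain ⟨c, d, hcd, q2, q3, rfl, hE⟩ := ih he
      exact ⟨c, d, hcd, Walk.cons h q2, q3, by simp [Walk.cons_append], hE⟩

lemma walk_split2 {V : Type} {G : SimpleGraph V} {s t : V} (p : G.Walk s t)
    {e1 e2 : Sym2 V} (h1 : e1 ∈ p.edges) (h2 : e2 ∈ p.edges) (hne : e1 ≠ e2) :
    ∃ (a b c d : V) (hab : G.Adj a b) (hcd : G.Adj c d)
      (q1 : G.Walk s a) (q2 : G.Walk b c) (q3 : G.Walk d t),
      p = q1.append (Walk.cons hab (q2.append (Walk.cons hcd q3))) ∧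
      ((s(a, b) = e1 ∧ s(c, d) = e2) ∨ (s(a, b) = e2 ∧ s(c, d) = e1)) := by
  induction p with
  | nil => simp at h1
  | cons h q ih =>
    rw [Walk.edges_cons, List.mem_cons] at h1 h2
    rcases h1 with h1 | h1
    · rcases h2 with h2 | h2
      · exact absurd (h1.trans h2.symm) hne
      · obtain ⟨c, d, hcd, q2, q3, rfl, hE⟩ := walk_split1 q h2
        exact ⟨_, _, c, d, h, hcd, Walk.nil, q2, q3, by simp, Or.inl ⟨h1.symm, hE⟩⟩
    · rcases h2 with h2 | h2
      · obtain ⟨c, d, hcd, q2, q3, rfl, hE⟩ := walk_split1 q h1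
        exact ⟨_, _, c, d, h, hcd, Walk.nil, q2, q3, by simp, Or.inr ⟨h2.symm, hE⟩⟩
      · obtain ⟨a, b, c, d, hab, hcd, q1, q2, q3, rfl, hE⟩ := ih h1 h2
        exact ⟨a, b, c, d, hab, hcd, Walk.cons h q1, q2, q3, by simp [Walk.cons_append], hE⟩

lemma walkInSubgraph_mono {V : Type} {G : SimpleGraph V} {S : G.Subgraph}
    {a b a' b' : V} {p : G.Walk a b} {q : G.Walk a' b'} (hp : WalkInSubgraph S p)
    (hsup : ∀ y ∈ q.support, y ∈ p.support) (hedg : ∀ e ∈ q.edges, e ∈ p.edges) :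
    WalkInSubgraph S q :=
  ⟨fun y hy => hp.1 y (hsup y hy), fun e he => hp.2 e (hedg e he)⟩

lemma walkInSubgraph_append {V : Type} {G : SimpleGraph V} {S : G.Subgraph}
    {a b c : V} {p : G.Walk a b} {q : G.Walk b c} (hp : WalkInSubgraph S p)
    (hq : WalkInSubgraph S q) : WalkInSubgraph S (p.append q) := by
  constructor
  · intro y hy
    rw [Walk.mem_support_append_iff] at hy
    exact hy.elim (hp.1 y) (hq.1 y)
  · intro e he
    rw [Walk.edges_append, List.mem_append] at he
    exact he.elim (hp.2 e) (hq.2 e)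

end CopsRobbers
set_option maxHeartbeats 2000000 in
open CopsRobbers in
/-- In a kite-augmented 1-plane graph `G`, every `(s,t)`-subgraph `S` contains an
`(s,t)`-path `P` that is a shortest `(s,t)`-path in `S` and is non-self-crossing. -/
theorem statement10 {V : Type} [Fintype V] (G : SimpleGraph V) (D : PlaneDrawing G)
    (h1 : D.OnePlane) (hka : D.KiteAugmented) (s t : V) (hst : s ≠ t)
    (S : G.Subgraph) (hS : IsSTSubgraph D s t S) :
    ∃ P : G.Walk s t, P.IsPath ∧ WalkInSubgraph S P ∧
      (∀ Q : G.Walk s t, WalkInSubgraph S Q → P.length ≤ Q.length) ∧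
      ∀ a b c e, s(a, b) ∈ P.edges → s(c, e) ∈ P.edges → ¬D.Crosses a b c e := by
  classical
  obtain ⟨hconn, hs, ht, hkite⟩ := hS
  -- a first walk from s to t inside S
  obtain ⟨w0⟩ : S.coe.Reachable ⟨s, hs⟩ ⟨t, ht⟩ := hconn ⟨s, hs⟩ ⟨t, ht⟩
  have hw1 : WalkInSubgraph S (w0.map S.hom) := by
    constructor
    · intro y hy
      rw [SimpleGraph.Walk.support_map, List.mem_map] at hy
      obtain ⟨x, _, rfl⟩ := hy
      exact x.2
    · intro e he
      rw [SimpleGraph.Walk.edges_map, List.mem_map] at he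
      obtain ⟨e', he', rfl⟩ := he
      revert he'
      refine Sym2.ind (fun x y he' => ?_) e'
      have hadj : S.coe.Adj x y := SimpleGraph.Walk.adj_of_mem_edges _ he'
      exact SimpleGraph.Subgraph.mem_edgeSet.mpr hadj
  -- minimize length
  have hBne : ∃ n, ∃ Q : G.Walk s t, WalkInSubgraph S Q ∧ Q.length = n :=
    ⟨_, w0.map S.hom, hw1, rfl⟩
  set B : Set ℕ := {n | ∃ Q : G.Walk s t, WalkInSubgraph S Q ∧ Q.length = n} with hB
  obtain ⟨Q0, hQ0S, hQ0len⟩ : sInf B ∈ B := Nat.sInf_mem hBne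
  have hmin : ∀ R : G.Walk s t, WalkInSubgraph S R → sInf B ≤ R.length :=
    fun R hR => Nat.sInf_le ⟨R, hR, rfl⟩
  have hP0S : WalkInSubgraph S Q0.bypass :=
    walkInSubgraph_mono hQ0S (fun y hy => Q0.support_bypass_subset hy)
      (fun e he => Q0.edges_bypass_subset he)
  -- crossing-pair counting function
  set F : G.Walk s t → Finset (Sym2 V × Sym2 V) := fun P =>
    (P.edges.toFinset ×ˢ P.edges.toFinset).filter
      (fun z => ∃ p q r u, s(p, q) = z.1 ∧ s(r, u) = z.2 ∧ D.Crosses p q r u) with hF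
  have hmemF : ∀ (Q : G.Walk s t) (z : Sym2 V × Sym2 V), z ∈ F Q ↔
      (z.1 ∈ Q.edges ∧ z.2 ∈ Q.edges) ∧
      ∃ p q r u, s(p, q) = z.1 ∧ s(r, u) = z.2 ∧ D.Crosses p q r u := by
    intro Q z
    simp [hF, Finset.mem_filter, Finset.mem_product, List.mem_toFinset, and_assoc]
  -- minimize number of crossing pairs among shortest in-S paths
  have hCne : ∃ m, ∃ P : G.Walk s t,
      (P.IsPath ∧ WalkInSubgraph S P ∧
        ∀ R : G.Walk s t, WalkInSubgraph S R → P.length ≤ R.length) ∧ (F P).card = m := by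
    refine ⟨_, Q0.bypass, ⟨Q0.bypass_isPath, hP0S, fun R hR => ?_⟩, rfl⟩
    exact le_trans (le_trans Q0.length_bypass_le (le_of_eq hQ0len)) (hmin R hR)
  set C : Set ℕ := {m | ∃ P : G.Walk s t,
      (P.IsPath ∧ WalkInSubgraph S P ∧
        ∀ R : G.Walk s t, WalkInSubgraph S R → P.length ≤ R.length) ∧ (F P).card = m}
    with hC
  obtain ⟨P, ⟨hPpath, hPS, hPmin⟩, hPcard⟩ : sInf C ∈ C := Nat.sInf_mem hCne
  refine ⟨P, hPpath, hPS, hPmin, ?_⟩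
  intro a b c e hab hce hcr
  have hne : s(a, b) ≠ s(c, e) := hcr.2.2.1
  obtain ⟨a', b', c', d', hab', hcd', q1, q2, q3, hPeq, hcase⟩ := walk_split2 P hab hce hne
  have hcr' : D.Crosses a' b' c' d' := by
    rcases hcase with ⟨hx, hy⟩ | ⟨hx, hy⟩
    · exact PlaneDrawing.crosses_of_sym2_eq hx hy hcr
    · exact PlaneDrawing.crosses_of_sym2_eq hx hy hcr.comm
  have hdist := h1.2 _ _ _ _ hcr'
  have hPedges : P.edges = q1.edges ++ (s(a', b') ::
      (q2.edges ++ (s(c', d') :: q3.edges))) := by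
    rw [hPeq]; simp [SimpleGraph.Walk.edges_append, SimpleGraph.Walk.edges_cons]
  -- vertices in S
  have ha'P : a' ∈ P.support := by
    rw [hPeq, SimpleGraph.Walk.mem_support_append_iff]
    exact Or.inl (SimpleGraph.Walk.end_mem_support q1)
  have hc'P : c' ∈ P.support := by
    rw [hPeq, SimpleGraph.Walk.mem_support_append_iff]
    right
    rw [SimpleGraph.Walk.support_cons, List.mem_cons]
    right
    rw [SimpleGraph.Walk.mem_support_append_iff]
    exact Or.inr (SimpleGraph.Walk.start_mem_support _)
  have haS : a' ∈ S.verts := hPS.1 a' ha'P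
  have hcS : c' ∈ S.verts := hPS.1 c' hc'P
  -- path facts
  have hPath2 : (q1.append (SimpleGraph.Walk.cons hab'
      (q2.append (SimpleGraph.Walk.cons hcd' q3)))).IsPath := hPeq ▸ hPpath
  have hrestPath : (SimpleGraph.Walk.cons hab'
      (q2.append (SimpleGraph.Walk.cons hcd' q3))).IsPath := hPath2.of_append_right
  have hTpath : (SimpleGraph.Walk.cons hcd' q3).IsPath :=
    hrestPath.of_cons.of_append_right
  have hc't : c' ≠ t := by
    intro h
    have hnod := hTpath.support_nodup
    rw [SimpleGraph.Walk.support_cons] at hnod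
    exact (List.nodup_cons.mp hnod).1 (by rw [h]; exact SimpleGraph.Walk.end_mem_support q3)
  have hc's : c' ≠ s := by
    intro h
    have hnod := hPath2.support_nodup
    rw [SimpleGraph.Walk.support_append] at hnod
    have hdisj := (List.nodup_append'.mp hnod).2.2
    have hsq1 : s ∈ q1.support := SimpleGraph.Walk.start_mem_support q1
    have hcrest : c' ∈ (SimpleGraph.Walk.cons hab'
        (q2.append (SimpleGraph.Walk.cons hcd' q3))).support.tail := by
      rw [SimpleGraph.Walk.support_cons]
      simp only [List.tail_cons]
      rw [SimpleGraph.Walk.mem_support_append_iff]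
      exact Or.inr (SimpleGraph.Walk.start_mem_support _)
    exact hdisj hsq1 (h ▸ hcrest)
  have hsetne : ({a', c'} : Set V) ≠ {s, t} := by
    intro h
    have hc : c' ∈ ({s, t} : Set V) := h ▸ (by simp : c' ∈ ({a', c'} : Set V))
    rcases hc with h' | h'
    · exact hc's h'
    · exact hc't h'
  -- the kite path
  obtain ⟨κ, hκ⟩ := hka a' b' c' d' hcr'
  have hκS : WalkInSubgraph S κ := hkite a' c' haS hcS hdist.1 hsetne b' d' κ hκ
  have hκunc : ∀ e ∈ κ.edges, D.UncrossedE e := hκ.2.2.2.1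
  -- the rerouted walk
  set P' : G.Walk s t := q1.append (κ.append (SimpleGraph.Walk.cons hcd' q3)) with hP'
  have hκlen : κ.length ≤ q2.length + 1 := by
    have := hκ.2.2.1 (SimpleGraph.Walk.cons hab' q2)
    simpa using this
  have hlen' : P'.length ≤ P.length := by
    rw [hP', hPeq]
    simp only [SimpleGraph.Walk.length_append, SimpleGraph.Walk.length_cons]
    omega
  -- P' lies in S
  have hq1S : WalkInSubgraph S q1 := by
    refine walkInSubgraph_mono hPS ?_ ?_
    · intro y hy
      rw [hPeq, SimpleGraph.Walk.mem_support_append_iff]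
      exact Or.inl hy
    · intro e' he'
      rw [hPedges, List.mem_append]
      exact Or.inl he'
  have hTS : WalkInSubgraph S (SimpleGraph.Walk.cons hcd' q3) := by
    refine walkInSubgraph_mono hPS ?_ ?_
    · intro y hy
      rw [hPeq, SimpleGraph.Walk.mem_support_append_iff]
      right
      rw [SimpleGraph.Walk.support_cons, List.mem_cons]
      right
      rw [SimpleGraph.Walk.mem_support_append_iff]
      exact Or.inr hy
    · intro e' he'
      rw [SimpleGraph.Walk.edges_cons, List.mem_cons] at he'
      rw [hPedges]
      simp only [List.mem_append, List.mem_cons]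
      tauto
  have hP'S : WalkInSubgraph S P' := walkInSubgraph_append hq1S (walkInSubgraph_append hκS hTS)
  have hP'edges : P'.edges = q1.edges ++ (κ.edges ++ (s(c', d') :: q3.edges)) := by
    rw [hP']
    simp [SimpleGraph.Walk.edges_append, SimpleGraph.Walk.edges_cons]
  -- nodup facts about P.edges
  have hPn : P.edges.Nodup := hPpath.isTrail.edges_nodup
  rw [hPedges] at hPn
  obtain ⟨hn1, hn2, hdisjE⟩ := List.nodup_append'.mp hPn
  have habq1 : s(a', b') ∉ q1.edges := fun h => hdisjE h List.mem_cons_self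
  have habL : s(a', b') ∉ q2.edges ++ (s(c', d') :: q3.edges) := (List.nodup_cons.mp hn2).1
  have habcd : s(a', b') ≠ s(c', d') := by
    intro h; exact habL (by rw [List.mem_append, List.mem_cons]; tauto)
  have habq3 : s(a', b') ∉ q3.edges := by
    intro h; exact habL (by rw [List.mem_append, List.mem_cons]; tauto)
  -- F P' ⊂ F P
  have hssub : F P' ⊂ F P := by
    constructor
    · intro z hz
      rw [hmemF] at hz ⊢
      obtain ⟨⟨hz1, hz2⟩, p, q, r, u, hpq, hru, hzcr⟩ := hz
      have hz1' : z.1 ∉ κ.edges := fun hmem => (hκunc z.1 hmem) p q r u hpq hzcr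
      have hz2' : z.2 ∉ κ.edges := fun hmem => (hκunc z.2 hmem) r u p q hru hzcr.comm
      refine ⟨⟨?_, ?_⟩, p, q, r, u, hpq, hru, hzcr⟩
      · rw [hP'edges] at hz1
        rw [hPedges]
        simp only [List.mem_append, List.mem_cons] at hz1 ⊢
        tauto
      · rw [hP'edges] at hz2
        rw [hPedges]
        simp only [List.mem_append, List.mem_cons] at hz2 ⊢
        tauto
    · intro hsub
      have hmem : (s(a', b'), s(c', d')) ∈ F P := by
        rw [hmemF]
        refine ⟨⟨?_, ?_⟩, a', b', c', d', rfl, rfl, hcr'⟩ <;>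
          · rw [hPedges]; simp
      have hmem' := hsub hmem
      rw [hmemF] at hmem'
      obtain ⟨⟨hm1, -⟩, -⟩ := hmem'
      rw [hP'edges] at hm1
      simp only [List.mem_append, List.mem_cons] at hm1
      rcases hm1 with h | h | h | h
      · exact habq1 h
      · exact (hκunc _ h) a' b' c' d' rfl hcr'
      · exact habcd h
      · exact habq3 h
  have hcardlt : (F P'.bypass).card < (F P).card := by
    refine lt_of_le_of_lt (Finset.card_le_card ?_) (Finset.card_lt_card hssub)
    intro z hz
    rw [hmemF] at hz ⊢
    obtain ⟨⟨hz1, hz2⟩, hrest⟩ := hz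
    exact ⟨⟨P'.edges_bypass_subset hz1, P'.edges_bypass_subset hz2⟩, hrest⟩
  have hA'' : (F P'.bypass).card ∈ C := by
    refine ⟨P'.bypass, ⟨P'.bypass_isPath, ?_, fun R hR => ?_⟩, rfl⟩
    · exact walkInSubgraph_mono hP'S (fun y hy => P'.support_bypass_subset hy)
        (fun e' he' => P'.edges_bypass_subset he')
    · exact le_trans (le_trans P'.length_bypass_le hlen') (hPmin R hR)
  have := Nat.sInf_le hA''
  omega
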